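/- Let (Ω, 𝓕, P) be a probability space and let ξ_1,…,ξ_k be real random variables. For each i let 1 < b_i ≤ ∞ and ψ_i : [1,b_i) → (0,∞), and suppose ‖ξ_i‖_{Gψ_i} := sup_{p ∈ [1,b_i)} (E|ξ_i|^p)^{1/p} / ψ_i(p) < ∞. Let p_1,…,p_k ≥ 1 and a_1,…,a_k > 1 with Σ_{i=1}^k 1/a_i = 1 and a_i·p_i ∈ [1, b_i) for every i. Then for every u > 0, P( min_{1 ≤ i ≤ k} |ξ_i| > u ) ≤ u^{−Σ_{i=1}^k p_i} · ∏_{i=1}^k ( ‖ξ_i‖_{Gψ_i} · ψ_i(a_i p_i) )^{p_i}. -/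

import Mathlib

open MeasureTheory Set Filter
open scoped ENNReal

noncomputable section

/-- The Grand Lebesgue Space norm `‖ζ‖_{Gψ} = sup_{p ∈ [1,b)} (E|ζ|^p)^{1/p} / ψ(p)`,
computed in `[0,∞]`; here `b ∈ (1,∞]` is encoded as an element of `ℝ≥0∞`. -/
def glsNorm {Ω : Type*} [MeasurableSpace Ω] (P : Measure Ω) (b : ℝ≥0∞)
    (ψ : ℝ → ℝ) (ζ : Ω → ℝ) : ℝ≥0∞ :=
  ⨆ p ∈ {p : ℝ | 1 ≤ p ∧ ENNReal.ofReal p < b},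
    (∫⁻ ω, ENNReal.ofReal (|ζ ω| ^ p) ∂P) ^ (1 / p) / ENNReal.ofReal (ψ p)

/-- Tail estimate for the minimum of random variables from Grand Lebesgue Spaces:
`P( min_i |ξ_i| > u ) ≤ u^{−Σ p_i} · ∏ ( ‖ξ_i‖_{Gψ_i} · ψ_i(a_i p_i) )^{p_i}`. -/
theorem min_tail_GLS_bound
    {Ω : Type*} [MeasurableSpace Ω] (P : Measure Ω) [IsProbabilityMeasure P]
    (k : ℕ) (hk : 1 ≤ k)
    (ξ : Fin k → Ω → ℝ) (hξ : ∀ i, Measurable (ξ i))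
    (b : Fin k → ℝ≥0∞) (hb : ∀ i, 1 < b i)
    (ψ : Fin k → ℝ → ℝ)
    (hψpos : ∀ i, ∀ p : ℝ, 1 ≤ p → ENNReal.ofReal p < b i → 0 < ψ i p)
    (hGfin : ∀ i, glsNorm P (b i) (ψ i) (ξ i) < ∞)
    (p : Fin k → ℝ) (hp : ∀ i, 1 ≤ p i)
    (a : Fin k → ℝ) (ha : ∀ i, 1 < a i) (hsum : ∑ i, 1 / a i = 1)
    (hap : ∀ i, 1 ≤ a i * p i ∧ ENNReal.ofReal (a i * p i) < b i)
    (u : ℝ) (hu : 0 < u) :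
    P {ω | ∀ i, u < |ξ i ω|} ≤
      ENNReal.ofReal u ^ (-(∑ i, p i)) *
        ∏ i, (glsNorm P (b i) (ψ i) (ξ i) * ENNReal.ofReal (ψ i (a i * p i))) ^ (p i) := by
  classical
  set N : Fin k → ℝ≥0∞ := fun i => glsNorm P (b i) (ψ i) (ξ i) with hN
  have hppos : ∀ i, 0 < p i := fun i => lt_of_lt_of_le one_pos (hp i)
  have hapos : ∀ i, 0 < a i := fun i => lt_trans one_pos (ha i)
  set g : Fin k → Ω → ℝ≥0∞ := fun i ω => ENNReal.ofReal |ξ i ω| with hg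
  have hgm : ∀ i, Measurable (g i) := fun i => (hξ i).abs.ennreal_ofReal
  have hu0 : ENNReal.ofReal u ≠ 0 := by
    simp [ENNReal.ofReal_eq_zero, hu.not_ge]
  have hut : ENNReal.ofReal u ≠ ∞ := ENNReal.ofReal_ne_top
  have hε0 : ENNReal.ofReal u ^ (∑ i, p i) ≠ 0 := by
    simp [ENNReal.rpow_eq_zero_iff, hu0, hut]
  have hεt : ENNReal.ofReal u ^ (∑ i, p i) ≠ ∞ := by
    simp [ENNReal.rpow_eq_top_iff, hu0, hut]
  -- Step 1: Markov/Chebyshev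
  have step1 : P {ω | ∀ i, u < |ξ i ω|} ≤
      (ENNReal.ofReal u ^ (∑ i, p i))⁻¹ * ∫⁻ ω, ∏ i, g i ω ^ p i ∂P := by
    have hmeas : Measurable fun ω => ∏ i, g i ω ^ p i :=
      Finset.measurable_prod _ fun i _ => (hgm i).pow_const _
    have hsubset : {ω | ∀ i, u < |ξ i ω|} ⊆
        {ω | ENNReal.ofReal u ^ (∑ i, p i) ≤ ∏ i, g i ω ^ p i} := by
      intro ω hω
      have hfac : ∀ i, ENNReal.ofReal u ^ p i ≤ g i ω ^ p i := fun i =>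
        ENNReal.rpow_le_rpow (ENNReal.ofReal_le_ofReal (hω i).le) (hppos i).le
      have hsum' : ENNReal.ofReal u ^ (∑ i, p i) = ∏ i, ENNReal.ofReal u ^ p i := by
        induction (Finset.univ : Finset (Fin k)) using Finset.induction with
        | empty => simp
        | insert _ _ hni ih =>
          rw [Finset.sum_insert hni, Finset.prod_insert hni, ← ih,
            ENNReal.rpow_add _ _ hu0 hut]
      calc ENNReal.ofReal u ^ (∑ i, p i) = ∏ i, ENNReal.ofReal u ^ p i := hsum'
        _ ≤ ∏ i, g i ω ^ p i := Finset.prod_le_prod' fun i _ => hfac i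
    calc P {ω | ∀ i, u < |ξ i ω|}
        ≤ P {ω | ENNReal.ofReal u ^ (∑ i, p i) ≤ ∏ i, g i ω ^ p i} :=
          measure_mono hsubset
      _ ≤ (ENNReal.ofReal u ^ (∑ i, p i))⁻¹ * ∫⁻ ω, ∏ i, g i ω ^ p i ∂P := by
          rw [← ENNReal.div_eq_inv_mul, ENNReal.le_div_iff_mul_le (Or.inl hε0) (Or.inl hεt),
            mul_comm]
          exact mul_meas_ge_le_lintegral₀ hmeas.aemeasurable _
  -- Step 2: generalized Hölder
  have step2 : (∫⁻ ω, ∏ i, g i ω ^ p i ∂P) ≤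
      ∏ i, (∫⁻ ω, g i ω ^ (a i * p i) ∂P) ^ (1 / a i) := by
    have := ENNReal.lintegral_prod_norm_pow_le (μ := P) Finset.univ
      (f := fun i ω => g i ω ^ (a i * p i))
      (fun i _ => ((hgm i).pow_const _).aemeasurable)
      (p := fun i => 1 / a i) hsum (fun i _ => le_of_lt (by simpa using (one_div_pos.mpr (hapos i))))
    refine le_trans (le_of_eq ?_) this
    refine lintegral_congr fun ω => Finset.prod_congr rfl fun i _ => ?_
    rw [← ENNReal.rpow_mul]
    congr 1
    field_simp [(hapos i).ne']
  -- Step 3: bound each factor by the GLS norm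
  have step3 : ∀ i, (∫⁻ ω, g i ω ^ (a i * p i) ∂P) ^ (1 / a i) ≤
      (N i * ENNReal.ofReal (ψ i (a i * p i))) ^ (p i) := by
    intro i
    set q : ℝ := a i * p i with hq
    set I : ℝ≥0∞ := ∫⁻ ω, g i ω ^ q ∂P with hI
    have hIeq : I = ∫⁻ ω, ENNReal.ofReal (|ξ i ω| ^ q) ∂P := by
      refine lintegral_congr fun ω => ?_
      rw [ENNReal.ofReal_rpow_of_nonneg (abs_nonneg _)]
      have : (1 : ℝ) ≤ q := (hap i).1
      linarith
    have hψi : 0 < ψ i q := hψpos i q (hap i).1 (hap i).2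
    have hle : I ^ (1 / q) / ENNReal.ofReal (ψ i q) ≤ N i := by
      rw [hIeq]
      exact le_iSup₂ (f := fun (r : ℝ) (_ : r ∈ {r : ℝ | 1 ≤ r ∧ ENNReal.ofReal r < b i}) =>
        (∫⁻ ω, ENNReal.ofReal (|ξ i ω| ^ r) ∂P) ^ (1 / r) / ENNReal.ofReal (ψ i r))
        q ⟨(hap i).1, (hap i).2⟩
    have hle' : I ^ (1 / q) ≤ N i * ENNReal.ofReal (ψ i q) := by
      rw [← ENNReal.div_le_iff_le_mul (Or.inl (by simp [ENNReal.ofReal_eq_zero, hψi.not_ge]))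
        (Or.inl ENNReal.ofReal_ne_top)]
      exact hle
    have hIa : I ^ (1 / a i) = (I ^ (1 / q)) ^ (p i) := by
      rw [← ENNReal.rpow_mul]
      congr 1
      rw [hq]
      field_simp [(hapos i).ne', (hppos i).ne']
    rw [hIa]
    exact ENNReal.rpow_le_rpow hle' (hppos i).le
  calc P {ω | ∀ i, u < |ξ i ω|}
      ≤ (ENNReal.ofReal u ^ (∑ i, p i))⁻¹ * ∫⁻ ω, ∏ i, g i ω ^ p i ∂P := step1
    _ ≤ (ENNReal.ofReal u ^ (∑ i, p i))⁻¹ *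
        ∏ i, (∫⁻ ω, g i ω ^ (a i * p i) ∂P) ^ (1 / a i) :=
          mul_le_mul_right step2 _
    _ ≤ (ENNReal.ofReal u ^ (∑ i, p i))⁻¹ *
        ∏ i, (N i * ENNReal.ofReal (ψ i (a i * p i))) ^ (p i) :=
          mul_le_mul_right (Finset.prod_le_prod' fun i _ => step3 i) _
    _ = ENNReal.ofReal u ^ (-(∑ i, p i)) *
        ∏ i, (N i * ENNReal.ofReal (ψ i (a i * p i))) ^ (p i) := by
          rw [ENNReal.rpow_neg]

end
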